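/- Let E be a locally cartesian closed category with finite coproducts. The following conditions are equivalent: (1) E is extensive; (2) binary coproducts in E are disjoint; (3) the binary coproduct 1 + 1 of the terminal object with itself is disjoint. -/

import Mathlib

open CategoryTheory CategoryTheory.Limits

universe v u

variable {E : Type u} [Category.{v} E]

/-- A category with finite limits is locally cartesian closed if every pullback functor
`f* : E/J ⥤ E/I` has a right adjoint (pushforward). -/
def IsLCC (E : Type u) [Category.{v} E] [HasFiniteLimits E] : Prop :=
  ∀ ⦃I J : E⦄ (f : I ⟶ J), (Over.pullback f).IsLeftAdjoint

/-- The coproduct functor `E/A × E/B ⥤ E/(A + B)`. -/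
@[simps]
noncomputable def coprodOverFunctor [HasBinaryCoproducts E] (A B : E) :
    Over A × Over B ⥤ Over (A ⨿ B) where
  obj X := Over.mk (coprod.map X.1.hom X.2.hom)
  map {X Y} f := Over.homMk (coprod.map f.1.left f.2.left)
    (by dsimp; rw [coprod.map_map, Over.w, Over.w])
  map_id X := by ext; dsimp; ext <;> simp
  map_comp f g := by ext; dsimp; ext <;> simp

/-- A category with binary coproducts is extensive if each coproduct functor
`E/A × E/B ⥤ E/(A + B)` is an equivalence of categories. -/
def IsExtensive (E : Type u) [Category.{v} E] [HasBinaryCoproducts E] : Prop :=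
  ∀ A B : E, (coprodOverFunctor A B).IsEquivalence

/-- The binary coproduct `A + B` is disjoint: the coprojections are monomorphisms and their
pullback is an initial object. -/
def DisjointCoprod [HasBinaryCoproducts E] [HasPullbacks E] (A B : E) : Prop :=
  Mono (coprod.inl : A ⟶ A ⨿ B) ∧ Mono (coprod.inr : B ⟶ A ⨿ B) ∧
    Nonempty (IsInitial (pullback (coprod.inl : A ⟶ A ⨿ B) (coprod.inr : B ⟶ A ⨿ B)))

/-- Strict initial objects from LCC. -/
noncomputable def isInitialOfTo [HasFiniteLimits E] [HasInitial E] (hlcc : IsLCC E)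
    {X : E} (f : X ⟶ ⊥_ E) : IsInitial X := by
  haveI := hlcc f
  have h0 : IsInitial (Over.mk (𝟙 (⊥_ E))) := by
    refine IsInitial.ofUniqueHom (fun Y => Over.homMk (initial.to Y.left)
      (initialIsInitial.hom_ext _ _)) (fun Y m => ?_)
    ext
    exact initialIsInitial.hom_ext _ _
  have h1 : IsInitial ((Over.pullback f).obj (Over.mk (𝟙 (⊥_ E)))) :=
    h0.isInitialObj _ _
  have h2 : IsInitial (((Over.pullback f).obj (Over.mk (𝟙 (⊥_ E)))).left) :=
    h1.isInitialObj (Over.forget X) _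
  exact h2.ofIso (asIso (pullback.snd (𝟙 (⊥_ E)) f))

/-- Universality of binary coproducts from LCC. -/
noncomputable def univIsColimit [HasFiniteLimits E] [HasBinaryCoproducts E] (hlcc : IsLCC E)
    {A B Z : E} (f : Z ⟶ A ⨿ B) :
    IsColimit (BinaryCofan.mk (pullback.fst f coprod.inl) (pullback.fst f coprod.inr)) := by
  haveI := hlcc f
  let i₁ : Over.mk (coprod.inl : A ⟶ A ⨿ B) ⟶ Over.mk (𝟙 (A ⨿ B)) :=
    Over.homMk coprod.inl
  let i₂ : Over.mk (coprod.inr : B ⟶ A ⨿ B) ⟶ Over.mk (𝟙 (A ⨿ B)) :=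
    Over.homMk coprod.inr
  have hc0 : IsColimit (BinaryCofan.mk i₁ i₂) := by
    apply isColimitOfReflectsOfMapIsColimit (Over.forget (A ⨿ B))
    exact coprodIsCoprod A B
  have hc1 : IsColimit (BinaryCofan.mk ((Over.pullback f).map i₁) ((Over.pullback f).map i₂)) :=
    mapIsColimitOfPreservesOfIsColimit (Over.pullback f) _ _ hc0
  have hc2 : IsColimit (BinaryCofan.mk (((Over.pullback f).map i₁).left)
      (((Over.pullback f).map i₂).left)) :=
    mapIsColimitOfPreservesOfIsColimit (Over.forget Z) _ _ hc1
  have hc3 : IsColimit (BinaryCofan.mk (pullback.snd coprod.inl f) (pullback.snd coprod.inr f)) := by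
    have hiso : IsIso (pullback.snd (𝟙 (A ⨿ B)) f :
        ((Over.pullback f).obj (Over.mk (𝟙 (A ⨿ B)))).left ⟶ Z) := by
      refine ⟨⟨pullback.lift f (𝟙 _) (by simp), ?_, by erw [pullback.lift_snd]⟩⟩
      apply pullback.hom_ext <;> simp only [Category.assoc, Category.id_comp]
      · erw [pullback.lift_fst, ← pullback.condition, Category.comp_id]
      · erw [pullback.lift_snd, Category.comp_id]
    refine IsColimit.ofIsoColimit hc2 (Cocones.ext (@asIso _ _ _ _ (pullback.snd (𝟙 (A ⨿ B)) f :
      ((Over.pullback f).obj (Over.mk (𝟙 (A ⨿ B)))).left ⟶ Z) hiso) ?_)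
    rintro ⟨⟨⟩⟩ <;> dsimp [i₁, i₂] <;> exact pullback.lift_snd _ _ _
  have k₁ := pullbackSymmetry_hom_comp_snd f (coprod.inl : A ⟶ A ⨿ B)
  have k₂ := pullbackSymmetry_hom_comp_snd f (coprod.inr : B ⟶ A ⨿ B)
  rw [← k₁, ← k₂]
  exact (BinaryCofan.mk _ _).isColimitCompRightIso (pullbackSymmetry f coprod.inr).hom
    ((BinaryCofan.mk _ _).isColimitCompLeftIso (pullbackSymmetry f coprod.inl).hom hc3)
attribute [simp] coprod.inl_desc coprod.inr_desc
section Key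
variable [HasFiniteLimits E] [HasFiniteCoproducts E]

/-- If `m : P ⟶ A ⨿ B` is a mono, `u : A ⟶ P` satisfies `u ≫ m = inl`, and the pullback of `m`
along `inr` is initial, then `u` is an isomorphism. -/
theorem aux_isIso (hlcc : IsLCC E) {P A B : E} (m : P ⟶ A ⨿ B) [Mono m] (u : A ⟶ P)
    (hu : u ≫ m = coprod.inl)
    (hB : IsInitial (pullback m (coprod.inr : B ⟶ A ⨿ B))) : IsIso u := by
  have hQ := univIsColimit hlcc m
  haveI : IsIso (pullback.fst m (coprod.inl : A ⟶ A ⨿ B)) :=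
    (BinaryCofan.isColimit_iff_isIso_inl hB _).mp ⟨hQ⟩
  have hα1 : pullback.lift u (𝟙 A) (by simpa using hu) ≫ pullback.fst m coprod.inl = u :=
    pullback.lift_fst _ _ _
  have hα2 : pullback.lift u (𝟙 A) (by simpa using hu) ≫ pullback.snd m coprod.inl = 𝟙 A :=
    pullback.lift_snd _ _ _
  refine ⟨inv (pullback.fst m coprod.inl) ≫ pullback.snd m coprod.inl, ?_, ?_⟩
  · rw [← hα1, Category.assoc, IsIso.hom_inv_id_assoc]
    exact hα2
  · rw [← cancel_mono m]
    simp only [Category.assoc, hu, Category.id_comp]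
    rw [← pullback.condition]
    simp

theorem key_inl (hlcc : IsLCC E) (hD : DisjointCoprod (⊤_ E) (⊤_ E)) (A B : E) :
    IsPullback (coprod.inl : A ⟶ A ⨿ B) (terminal.from A)
      (coprod.map (terminal.from A) (terminal.from B))
      (coprod.inl : ⊤_ E ⟶ (⊤_ E) ⨿ (⊤_ E)) := by
  haveI := hD.1
  set φ := coprod.map (terminal.from A) (terminal.from B) with hφ
  have comm : (coprod.inl : A ⟶ A ⨿ B) ≫ φ = terminal.from A ≫ coprod.inl := by simp [hφ]
  have hPB : IsInitial (pullback (pullback.fst φ (coprod.inl : ⊤_ E ⟶ (⊤_ E) ⨿ (⊤_ E)))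
      (coprod.inr : B ⟶ A ⨿ B)) := by
    have w : (pullback.fst (pullback.fst φ coprod.inl) (coprod.inr : B ⟶ A ⨿ B) ≫
          pullback.snd φ coprod.inl) ≫ (coprod.inl : ⊤_ E ⟶ (⊤_ E) ⨿ (⊤_ E)) =
        (pullback.snd (pullback.fst φ coprod.inl) (coprod.inr : B ⟶ A ⨿ B) ≫
          terminal.from B) ≫ coprod.inr := by
      rw [Category.assoc, ← pullback.condition, ← Category.assoc, pullback.condition,
        Category.assoc, Category.assoc, hφ, coprod.inr_map]
    exact isInitialOfTo hlcc (pullback.lift _ _ w ≫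
      (hD.2.2.some.uniqueUpToIso initialIsInitial).hom)
  haveI : IsIso (pullback.lift coprod.inl (terminal.from A) comm) :=
    aux_isIso hlcc (pullback.fst φ coprod.inl) _ (pullback.lift_fst _ _ _) hPB
  exact IsPullback.of_iso_pullback ⟨comm⟩
    (asIso (pullback.lift coprod.inl (terminal.from A) comm)) (pullback.lift_fst _ _ _)
    (pullback.lift_snd _ _ _)

theorem key_inr (hlcc : IsLCC E) (hD : DisjointCoprod (⊤_ E) (⊤_ E)) (A B : E) :
    IsPullback (coprod.inr : B ⟶ A ⨿ B) (terminal.from B)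
      (coprod.map (terminal.from A) (terminal.from B))
      (coprod.inr : ⊤_ E ⟶ (⊤_ E) ⨿ (⊤_ E)) := by
  have s := key_inl hlcc hD B A
  have t : IsPullback (coprod.braiding B A).hom
      (coprod.map (terminal.from B) (terminal.from A))
      (coprod.map (terminal.from A) (terminal.from B)) (coprod.braiding (⊤_ E) (⊤_ E)).hom :=
    IsPullback.of_horiz_isIso ⟨by aesop_cat⟩
  have := s.paste_horiz t
  simpa using this
end Key
theorem finitaryExtensive_of_disjoint [HasFiniteLimits E] [HasFiniteCoproducts E]
    (hlcc : IsLCC E) (hD : DisjointCoprod (⊤_ E) (⊤_ E)) : FinitaryExtensive E := by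
  rw [finitaryExtensive_iff_of_isTerminal E (⊤_ E) terminalIsTerminal
    (BinaryCofan.mk coprod.inl coprod.inr) (coprodIsCoprod _ _)]
  apply BinaryCofan.isVanKampen_mk _ (fun X Y => BinaryCofan.mk coprod.inl coprod.inr)
      (fun X Y => coprodIsCoprod X Y)
      (fun f g => PullbackCone.mk (pullback.fst f g) (pullback.snd f g) pullback.condition)
      (fun f g => pullbackIsPullback f g)
  · intro X' Y' αX αY f hX hY
    have hαX : αX = terminal.from X' := terminalIsTerminal.hom_ext _ _
    have hαY : αY = terminal.from Y' := terminalIsTerminal.hom_ext _ _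
    have hf : f = coprod.map (terminal.from X') (terminal.from Y') := by
      apply coprod.hom_ext
      · erw [coprod.inl_map, ← hαX]; exact hX.symm
      · erw [coprod.inr_map, ← hαY]; exact hY.symm
    subst hαX hαY hf
    exact ⟨key_inl hlcc hD X' Y', key_inr hlcc hD X' Y'⟩
  · intro Z f
    exact univIsColimit hlcc f

theorem disjoint_of_finitaryExtensive [HasFiniteLimits E] [HasFiniteCoproducts E]
    [FinitaryExtensive E] (A B : E) : DisjointCoprod A B := by
  refine ⟨inferInstance, inferInstance, ?_⟩
  have h := FinitaryExtensive.isPullback_initial_to_binaryCofan (coprodIsCoprod A B)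
  exact ⟨initialIsInitial.ofIso h.isoPullback⟩

/-- In a finitary extensive category, the square expressing `X` as the pullback of
`coprod.map X.hom Y.hom` along `inl` is a pullback. -/
theorem sq_inl [HasFiniteLimits E] [HasFiniteCoproducts E] [FinitaryExtensive E]
    {A B : E} (X : Over A) (Y : Over B) :
    IsPullback coprod.inl X.hom (coprod.map X.hom Y.hom) (coprod.inl : A ⟶ A ⨿ B) := by
  have H := FinitaryExtensive.van_kampen'
    (BinaryCofan.mk (coprod.inl : A ⟶ A ⨿ B) coprod.inr) (coprodIsCoprod A B)
  rw [BinaryCofan.isVanKampen_iff] at H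
  exact ((H (BinaryCofan.mk coprod.inl coprod.inr) X.hom Y.hom (coprod.map X.hom Y.hom)
    (coprod.inl_map _ _).symm (coprod.inr_map _ _).symm).mp ⟨coprodIsCoprod _ _⟩).1

theorem sq_inr [HasFiniteLimits E] [HasFiniteCoproducts E] [FinitaryExtensive E]
    {A B : E} (X : Over A) (Y : Over B) :
    IsPullback coprod.inr Y.hom (coprod.map X.hom Y.hom) (coprod.inr : B ⟶ A ⨿ B) := by
  have H := FinitaryExtensive.van_kampen'
    (BinaryCofan.mk (coprod.inl : A ⟶ A ⨿ B) coprod.inr) (coprodIsCoprod A B)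
  rw [BinaryCofan.isVanKampen_iff] at H
  exact ((H (BinaryCofan.mk coprod.inl coprod.inr) X.hom Y.hom (coprod.map X.hom Y.hom)
    (coprod.inl_map _ _).symm (coprod.inr_map _ _).symm).mp ⟨coprodIsCoprod _ _⟩).2
theorem isEquivalence_of_finitaryExtensive [HasFiniteLimits E] [HasFiniteCoproducts E]
    [FinitaryExtensive E] (hlcc : IsLCC E) (A B : E) :
    (coprodOverFunctor A B).IsEquivalence := by
  haveI : (coprodOverFunctor A B).Faithful := by
    constructor
    intro X Y f g h
    have h' : coprod.map f.1.left f.2.left = coprod.map g.1.left g.2.left := by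
      simpa [coprodOverFunctor] using congrArg CommaMorphism.left h
    have h1 := congrArg (fun t => (coprod.inl : X.1.left ⟶ _) ≫ t) h'
    have h2 := congrArg (fun t => (coprod.inr : X.2.left ⟶ _) ≫ t) h'
    simp only [coprod.inl_map] at h1
    simp only [coprod.inr_map] at h2
    have e1 : f.1.left = g.1.left := by rwa [cancel_mono] at h1
    have e2 : f.2.left = g.2.left := by rwa [cancel_mono] at h2
    exact Prod.ext (Over.OverMorphism.ext e1) (Over.OverMorphism.ext e2)
  haveI : (coprodOverFunctor A B).Full := by
    constructor
    intro X Y k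
    have wk : k.left ≫ coprod.map Y.1.hom Y.2.hom = coprod.map X.1.hom X.2.hom := Over.w k
    have w1 : (coprod.inl ≫ k.left) ≫ coprod.map Y.1.hom Y.2.hom = X.1.hom ≫ coprod.inl := by
      erw [Category.assoc, wk]; simp
    have w2 : (coprod.inr ≫ k.left) ≫ coprod.map Y.1.hom Y.2.hom = X.2.hom ≫ coprod.inr := by
      erw [Category.assoc, wk]; simp
    refine ⟨⟨Over.homMk ((sq_inl Y.1 Y.2).lift (coprod.inl ≫ k.left) X.1.hom w1)
        ((sq_inl Y.1 Y.2).lift_snd _ _ _),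
      Over.homMk ((sq_inr Y.1 Y.2).lift (coprod.inr ≫ k.left) X.2.hom w2)
        ((sq_inr Y.1 Y.2).lift_snd _ _ _)⟩, ?_⟩
    apply Over.OverMorphism.ext
    apply coprod.hom_ext
    · simpa [coprodOverFunctor] using (sq_inl Y.1 Y.2).lift_fst (coprod.inl ≫ k.left) X.1.hom w1
    · simpa [coprodOverFunctor] using (sq_inr Y.1 Y.2).lift_fst (coprod.inr ≫ k.left) X.2.hom w2
  haveI : (coprodOverFunctor A B).EssSurj := by
    constructor
    intro W
    have hc := univIsColimit hlcc W.hom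
    have f1 := hc.fac (BinaryCofan.mk coprod.inl coprod.inr) ⟨WalkingPair.left⟩
    have f2 := hc.fac (BinaryCofan.mk coprod.inl coprod.inr) ⟨WalkingPair.right⟩
    simp only [BinaryCofan.ι_app_left, BinaryCofan.ι_app_right, BinaryCofan.mk_pt,
      BinaryCofan.mk_inl, BinaryCofan.mk_inr] at f1 f2
    have hinv1 : coprod.desc (pullback.fst W.hom coprod.inl) (pullback.fst W.hom coprod.inr) ≫
        hc.desc (BinaryCofan.mk coprod.inl coprod.inr) = 𝟙 _ := by
      apply coprod.hom_ext
      · erw [← Category.assoc, coprod.inl_desc, Category.comp_id, f1]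
      · erw [← Category.assoc, coprod.inr_desc, Category.comp_id, f2]
    have hinv2 : hc.desc (BinaryCofan.mk coprod.inl coprod.inr) ≫
        coprod.desc (pullback.fst W.hom coprod.inl) (pullback.fst W.hom coprod.inr) = 𝟙 _ := by
      apply BinaryCofan.IsColimit.hom_ext hc <;>
        simp only [BinaryCofan.mk_inl, BinaryCofan.mk_inr, Category.comp_id, ← Category.assoc]
      · erw [← Category.assoc, f1, coprod.inl_desc]; exact (Category.comp_id _).symm
      · erw [← Category.assoc, f2, coprod.inr_desc]; exact (Category.comp_id _).symm
    refine ⟨⟨Over.mk (pullback.snd W.hom coprod.inl), Over.mk (pullback.snd W.hom coprod.inr)⟩,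
      ⟨Over.isoMk ⟨coprod.desc (pullback.fst W.hom coprod.inl) (pullback.fst W.hom coprod.inr),
        hc.desc (BinaryCofan.mk coprod.inl coprod.inr), hinv1, hinv2⟩ ?_⟩⟩
    apply coprod.hom_ext
    · simp [pullback.condition, coprodOverFunctor]
    · simp [pullback.condition, coprodOverFunctor]
  constructor <;> exact inferInstance


section FF
variable [HasFiniteLimits E] [HasFiniteCoproducts E] {A B : E}
  [(coprodOverFunctor A B).Full] [(coprodOverFunctor A B).Faithful]

theorem ff_lift_unique_inl (X : Over A) (Y : Over B) {T : E} (t : T ⟶ X.left ⨿ Y.left)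
    (sA : T ⟶ A) (w : t ≫ coprod.map X.hom Y.hom = sA ≫ coprod.inl) :
    ∃! l : T ⟶ X.left, l ≫ coprod.inl = t ∧ l ≫ X.hom = sA := by
  have w' : coprod.desc t (initial.to (X.left ⨿ Y.left)) ≫ coprod.map X.hom Y.hom =
      coprod.map sA (initial.to B) := by
    apply coprod.hom_ext
    · simp [w]
    · exact initialIsInitial.hom_ext _ _
  obtain ⟨⟨m₁, m₂⟩, hm⟩ := (coprodOverFunctor A B).map_surjective
    (Over.homMk (coprod.desc t (initial.to (X.left ⨿ Y.left))) w' :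
      (coprodOverFunctor A B).obj (Over.mk sA, Over.mk (initial.to B)) ⟶
        (coprodOverFunctor A B).obj (X, Y))
  refine ⟨m₁.left, ⟨?_, Over.w m₁⟩, ?_⟩
  · simpa [coprodOverFunctor] using congrArg (fun q => coprod.inl ≫ q.left) hm
  · rintro l ⟨hl1, hl2⟩
    have hFeq : (coprodOverFunctor A B).map
        ((Over.homMk l hl2 : Over.mk sA ⟶ X), m₂) = (coprodOverFunctor A B).map (m₁, m₂) := by
      rw [hm]
      apply Over.OverMorphism.ext
      apply coprod.hom_ext
      · simpa [coprodOverFunctor] using hl1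
      · exact initialIsInitial.hom_ext _ _
    exact congrArg (fun q => q.1.left) ((coprodOverFunctor A B).map_injective hFeq)

theorem ff_lift_unique_inr (X : Over A) (Y : Over B) {T : E} (t : T ⟶ X.left ⨿ Y.left)
    (sB : T ⟶ B) (w : t ≫ coprod.map X.hom Y.hom = sB ≫ coprod.inr) :
    ∃! l : T ⟶ Y.left, l ≫ coprod.inr = t ∧ l ≫ Y.hom = sB := by
  have w' : coprod.desc (initial.to (X.left ⨿ Y.left)) t ≫ coprod.map X.hom Y.hom =
      coprod.map (initial.to A) sB := by
    apply coprod.hom_ext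
    · exact initialIsInitial.hom_ext _ _
    · simp [w]
  obtain ⟨⟨m₁, m₂⟩, hm⟩ := (coprodOverFunctor A B).map_surjective
    (Over.homMk (coprod.desc (initial.to (X.left ⨿ Y.left)) t) w' :
      (coprodOverFunctor A B).obj (Over.mk (initial.to A), Over.mk sB) ⟶
        (coprodOverFunctor A B).obj (X, Y))
  refine ⟨m₂.left, ⟨?_, Over.w m₂⟩, ?_⟩
  · simpa [coprodOverFunctor] using congrArg (fun q => coprod.inr ≫ q.left) hm
  · rintro l ⟨hl1, hl2⟩
    have hFeq : (coprodOverFunctor A B).map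
        (m₁, (Over.homMk l hl2 : Over.mk sB ⟶ Y)) = (coprodOverFunctor A B).map (m₁, m₂) := by
      rw [hm]
      apply Over.OverMorphism.ext
      apply coprod.hom_ext
      · exact initialIsInitial.hom_ext _ _
      · simpa [coprodOverFunctor] using hl1
    exact congrArg (fun q => q.2.left) ((coprodOverFunctor A B).map_injective hFeq)

theorem ff_sq_inl (X : Over A) (Y : Over B) :
    IsPullback (coprod.inl : X.left ⟶ X.left ⨿ Y.left) X.hom
      (coprod.map X.hom Y.hom) (coprod.inl : A ⟶ A ⨿ B) := by
  have eq : (coprod.inl : X.left ⟶ X.left ⨿ Y.left) ≫ coprod.map X.hom Y.hom =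
      X.hom ≫ coprod.inl := by simp
  exact IsPullback.of_isLimit (PullbackCone.IsLimit.mk eq
    (fun s => (ff_lift_unique_inl X Y s.fst s.snd s.condition).choose)
    (fun s => (ff_lift_unique_inl X Y s.fst s.snd s.condition).choose_spec.1.1)
    (fun s => (ff_lift_unique_inl X Y s.fst s.snd s.condition).choose_spec.1.2)
    (fun s m h1 h2 =>
      (ff_lift_unique_inl X Y s.fst s.snd s.condition).choose_spec.2 m ⟨h1, h2⟩))

theorem ff_sq_inr (X : Over A) (Y : Over B) :
    IsPullback (coprod.inr : Y.left ⟶ X.left ⨿ Y.left) Y.hom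
      (coprod.map X.hom Y.hom) (coprod.inr : B ⟶ A ⨿ B) := by
  have eq : (coprod.inr : Y.left ⟶ X.left ⨿ Y.left) ≫ coprod.map X.hom Y.hom =
      Y.hom ≫ coprod.inr := by simp
  exact IsPullback.of_isLimit (PullbackCone.IsLimit.mk eq
    (fun s => (ff_lift_unique_inr X Y s.fst s.snd s.condition).choose)
    (fun s => (ff_lift_unique_inr X Y s.fst s.snd s.condition).choose_spec.1.1)
    (fun s => (ff_lift_unique_inr X Y s.fst s.snd s.condition).choose_spec.1.2)
    (fun s m h1 h2 =>
      (ff_lift_unique_inr X Y s.fst s.snd s.condition).choose_spec.2 m ⟨h1, h2⟩))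
end FF
theorem disjoint_of_isExtensive [HasFiniteLimits E] [HasFiniteCoproducts E] (hlcc : IsLCC E)
    (hext : IsExtensive E) (A B : E) : DisjointCoprod A B := by
  haveI := hext A B
  haveI : (coprodOverFunctor A B).Full := inferInstance
  haveI : (coprodOverFunctor A B).Faithful := inferInstance
  have H := ff_sq_inl (Over.mk (𝟙 A)) (Over.mk (initial.to B))
  have H' := ff_sq_inr (Over.mk (𝟙 A)) (Over.mk (initial.to B))
  have K := ff_sq_inr (Over.mk (initial.to A)) (Over.mk (𝟙 B))
  simp only [Over.mk_left, Over.mk_hom] at H H' K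
  refine ⟨⟨fun {T} u v huv => ?_⟩, ⟨fun {T} u v huv => ?_⟩, ?_⟩
  · have hm : Mono (coprod.inl : A ⟶ A ⨿ (⊥_ E)) := by
      constructor
      intro S a b hab
      have := congrArg (fun t => t ≫ coprod.desc (𝟙 A) (initial.to A)) hab
      simpa using this
    have w : (u ≫ (coprod.inl : A ⟶ A ⨿ (⊥_ E))) ≫ coprod.map (𝟙 A) (initial.to B) =
        v ≫ coprod.inl := by
      simpa using huv
    have hl1 := H.lift_fst (u ≫ coprod.inl) v w
    have hl2 := H.lift_snd (u ≫ coprod.inl) v w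
    rw [Category.comp_id] at hl2
    have hlu := (cancel_mono (coprod.inl : A ⟶ A ⨿ (⊥_ E))).mp hl1
    exact hlu.symm.trans hl2
  · have hm : Mono (coprod.inr : B ⟶ (⊥_ E) ⨿ B) := by
      constructor
      intro S a b hab
      have := congrArg (fun t => t ≫ coprod.desc (initial.to B) (𝟙 B)) hab
      simpa using this
    have w : (u ≫ (coprod.inr : B ⟶ (⊥_ E) ⨿ B)) ≫ coprod.map (initial.to A) (𝟙 B) =
        v ≫ coprod.inr := by
      simpa using huv
    have hl1 := K.lift_fst (u ≫ coprod.inr) v w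
    have hl2 := K.lift_snd (u ≫ coprod.inr) v w
    rw [Category.comp_id] at hl2
    have hlu := (cancel_mono (coprod.inr : B ⟶ (⊥_ E) ⨿ B)).mp hl1
    exact hlu.symm.trans hl2
  · have w2 : (pullback.fst (coprod.inl : A ⟶ A ⨿ B) coprod.inr ≫
        (coprod.inl : A ⟶ A ⨿ (⊥_ E))) ≫ coprod.map (𝟙 A) (initial.to B) =
        pullback.snd (coprod.inl : A ⟶ A ⨿ B) coprod.inr ≫ coprod.inr := by
      simpa using pullback.condition
    exact ⟨isInitialOfTo hlcc (H'.lift _ _ w2)⟩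

/-- for a locally cartesian closed category `E` with finite coproducts, the
following are equivalent: (1) `E` is extensive; (2) binary coproducts in `E` are disjoint;
(3) the coproduct `1 + 1` is disjoint. -/
theorem extensive_iff_disjoint_coproducts [HasFiniteLimits E] [HasFiniteCoproducts E]
    (hlcc : IsLCC E) :
    (IsExtensive E ↔ ∀ A B : E, DisjointCoprod A B) ∧
      ((∀ A B : E, DisjointCoprod A B) ↔ DisjointCoprod (⊤_ E) (⊤_ E)) := by
  constructor
  · constructor
    · exact fun hext A B => disjoint_of_isExtensive hlcc hext A B
    · intro hD
      haveI := finitaryExtensive_of_disjoint hlcc (hD _ _)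
      exact fun A B => isEquivalence_of_finitaryExtensive hlcc A B
  · constructor
    · exact fun h => h _ _
    · intro hD A B
      haveI := finitaryExtensive_of_disjoint hlcc hD
      exact disjoint_of_finitaryExtensive A B
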